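/- arXiv:1401.1169 — 2 statements merged into one kernel-verified Lean document; each statement's English description precedes it below -/
import Mathlib

section
/- For real β, γ, δ > 0, ω ∈ ℝ, and s > |ω|^{1/β}, the Laplace transform of t ↦ t^{γ−1} E^δ_{β,γ}(ω t^β) equals s^{−γ} (1 − ω s^{−β})^{−δ}, i.e., ∫_0^∞ e^{−st} t^{γ−1} E^δ_{β,γ}(ω t^β) dt = s^{−γ}(1 − ω s^{−β})^{−δ}. -/
open MeasureTheory Real Set

open Filter

private lemma tendsto_ratio_aux (c : ℝ) :
    Tendsto (fun j : ℕ => (c + j) / (1 + j)) atTop (nhds 1) := by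
  have h0 : Tendsto (fun j : ℕ => (c - 1) / (1 + j)) atTop (nhds 0) := by
    apply Tendsto.div_atTop (tendsto_const_nhds)
    exact tendsto_atTop_add_const_left _ 1 tendsto_natCast_atTop_atTop
  have : (fun j : ℕ => (c + j) / (1 + j)) = fun j : ℕ => 1 + (c - 1) / (1 + j) := by
    funext j
    have hj : (1 : ℝ) + j ≠ 0 := by positivity
    field_simp
    ring
  rw [this]
  simpa using tendsto_const_nhds.add h0

private lemma ratio_summable {b : ℕ → ℝ} (hb : ∀ j, 0 < b j)
    (hr : Tendsto (fun j : ℕ => b (j + 1) / b j) atTop (nhds 1))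
    {x : ℝ} (hx : |x| < 1) : Summable (fun j => b j * x ^ j) := by
  rcases eq_or_ne x 0 with rfl | hx0
  · apply summable_of_ne_finset_zero (s := {0})
    intro j hj
    simp only [Finset.mem_singleton] at hj
    simp [zero_pow hj]
  · refine summable_of_ratio_test_tendsto_lt_one hx ?_ ?_
    · filter_upwards with n
      exact mul_ne_zero (hb n).ne' (pow_ne_zero _ hx0)
    · have hxa : (0:ℝ) < |x| := abs_pos.mpr hx0
      have : (fun n : ℕ => ‖b (n + 1) * x ^ (n + 1)‖ / ‖b n * x ^ n‖)
          = fun n => (b (n + 1) / b n) * |x| := by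
        funext n
        simp only [Real.norm_eq_abs, abs_mul, abs_pow]
        rw [abs_of_pos (hb (n+1)), abs_of_pos (hb n), pow_succ, mul_div_mul_comm,
          mul_div_cancel_left₀ _ (pow_ne_zero n hxa.ne')]
      rw [this]
      simpa using hr.mul_const |x|

private noncomputable def bc (δ : ℝ) (j : ℕ) : ℝ :=
  (∏ i ∈ Finset.range j, (δ + i)) / (j.factorial : ℝ)

private lemma bc_pos {δ : ℝ} (hδ : 0 < δ) (j : ℕ) : 0 < bc δ j := by
  apply div_pos
  · exact Finset.prod_pos
      (fun i _ => add_pos_of_pos_of_nonneg hδ (Nat.cast_nonneg i))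
  · exact_mod_cast j.factorial_pos

private lemma bc_zero (δ : ℝ) : bc δ 0 = 1 := by simp [bc]

private lemma bc_rec {δ : ℝ} (hδ : 0 < δ) (j : ℕ) :
    bc δ (j + 1) * (j + 1) = bc δ j * (δ + j) := by
  have hj : ((j.factorial : ℝ)) ≠ 0 := by exact_mod_cast j.factorial_ne_zero
  have hj1 : ((j:ℝ) + 1) ≠ 0 := by positivity
  simp only [bc, Finset.prod_range_succ, Nat.factorial_succ]
  push_cast
  field_simp

private lemma bc_rec' {δ : ℝ} (hδ : 0 < δ) (j : ℕ) :
    bc δ (j + 1) = bc δ j * ((δ + j) / (j + 1)) := by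
  have hj1 : ((j:ℝ) + 1) ≠ 0 := by positivity
  rw [mul_div_assoc', ← bc_rec hδ j, mul_div_cancel_right₀ _ hj1]

private lemma bc_summable {δ : ℝ} (hδ : 0 < δ) {x : ℝ} (hx : |x| < 1) :
    Summable (fun j : ℕ => bc δ j * x ^ j) := by
  apply ratio_summable (bc_pos hδ) _ hx
  refine (tendsto_ratio_aux δ).congr fun j => ?_
  rw [bc_rec' hδ j, mul_div_cancel_left₀ _ (bc_pos hδ j).ne']
  ring_nf

private lemma bcd_summable {δ : ℝ} (hδ : 0 < δ) {x : ℝ} (hx : |x| < 1) :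
    Summable (fun j : ℕ => (bc δ j * (δ + j)) * x ^ j) := by
  apply ratio_summable
    (fun j => mul_pos (bc_pos hδ j) (add_pos_of_pos_of_nonneg hδ (Nat.cast_nonneg j))) _ hx
  refine (tendsto_ratio_aux (δ + 1)).congr fun j => ?_
  have h1 : (0:ℝ) < δ + j := add_pos_of_pos_of_nonneg hδ (Nat.cast_nonneg j)
  have h2 : ((j:ℝ) + 1) ≠ 0 := by positivity
  have h3 : (1:ℝ) + j ≠ 0 := by positivity
  have hb : bc δ j ≠ 0 := (bc_pos hδ j).ne'
  rw [bc_rec' hδ j]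
  push_cast
  field_simp
  ring

private lemma deriv_summable {δ : ℝ} (hδ : 0 < δ) {y : ℝ} (hy : |y| < 1) :
    Summable (fun j : ℕ => bc δ j * ((j : ℝ) * y ^ (j - 1))) := by
  rw [← summable_nat_add_iff 1]
  have : (fun j : ℕ => bc δ (j + 1) * (((j + 1 : ℕ) : ℝ) * y ^ ((j + 1) - 1)))
      = fun j : ℕ => (bc δ j * (δ + j)) * y ^ j := by
    funext j
    push_cast
    rw [← mul_assoc, bc_rec hδ]
  rw [this]
  exact bcd_summable hδ hy

private lemma hasDerivAt_bcsum {δ : ℝ} (hδ : 0 < δ) {y : ℝ} (hy : |y| < 1) :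
    HasDerivAt (fun z : ℝ => ∑' j : ℕ, bc δ j * z ^ j)
      (∑' j : ℕ, bc δ j * ((j : ℝ) * y ^ (j - 1))) y := by
  set r : ℝ := (|y| + 1) / 2 with hr
  have hyr : |y| < r := by rw [hr]; linarith
  have hr1 : r < 1 := by rw [hr]; linarith
  have hr0 : 0 < r := lt_of_le_of_lt (abs_nonneg y) hyr
  have hra : |r| < 1 := by rwa [abs_of_pos hr0]
  have husum : Summable (fun j : ℕ => bc δ j * ((j : ℝ) * r ^ (j - 1))) :=
    deriv_summable hδ hra
  apply hasDerivAt_tsum_of_isPreconnected husum (Metric.isOpen_ball)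
    (convex_ball (0:ℝ) r).isPreconnected
    (fun n z _ => (hasDerivAt_pow n z).const_mul (bc δ n))
    (fun n z hz => ?_) (Metric.mem_ball_self hr0)
    (bc_summable hδ (by norm_num) : Summable fun n => bc δ n * (0:ℝ) ^ n)
    (by simpa [Metric.mem_ball, Real.dist_eq] using hyr)
  · have hzr : |z| ≤ r := by
      rw [Metric.mem_ball, Real.dist_eq, sub_zero] at hz; exact hz.le
    have h1 : ‖bc δ n * ((n:ℝ) * z ^ (n - 1))‖ = bc δ n * ((n:ℝ) * |z| ^ (n - 1)) := by
      simp only [Real.norm_eq_abs, abs_mul, abs_pow, Nat.abs_cast,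
        abs_of_pos (bc_pos hδ n)]
    rw [h1]
    exact mul_le_mul_of_nonneg_left
      (mul_le_mul_of_nonneg_left (pow_le_pow_left₀ (abs_nonneg z) hzr _)
        (Nat.cast_nonneg n)) (bc_pos hδ n).le

private lemma bcsum_ode {δ : ℝ} (hδ : 0 < δ) {y : ℝ} (hy : |y| < 1) :
    (1 - y) * (∑' j : ℕ, bc δ j * ((j : ℝ) * y ^ (j - 1)))
      = δ * ∑' j : ℕ, bc δ j * y ^ j := by
  set D := ∑' j : ℕ, bc δ j * ((j : ℝ) * y ^ (j - 1)) with hD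
  have hsumD := deriv_summable hδ hy
  have hDe : D = ∑' j : ℕ, (bc δ j * (δ + j)) * y ^ j := by
    rw [hD, Summable.tsum_eq_zero_add hsumD]
    simp only [Nat.cast_zero, zero_mul, mul_zero, zero_add]
    apply tsum_congr
    intro j
    push_cast
    rw [← mul_assoc, bc_rec hδ]
  have hyD : y * D = ∑' j : ℕ, (bc δ j * j) * y ^ j := by
    rw [hD, ← tsum_mul_left]
    apply tsum_congr
    intro j
    cases j with
    | zero => simp
    | succ k =>
      rw [Nat.add_sub_cancel, pow_succ]
      push_cast
      ring
  have hsum1 : Summable (fun j : ℕ => δ * (bc δ j * y ^ j)) :=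
    (bc_summable hδ hy).mul_left δ
  have hsum2 : Summable (fun j : ℕ => (bc δ j * j) * y ^ j) := by
    apply (hsumD.mul_left y).congr
    intro j
    cases j with
    | zero => simp
    | succ k =>
      rw [Nat.add_sub_cancel, pow_succ]
      push_cast
      ring
  have key : (∑' j : ℕ, (bc δ j * (δ + j)) * y ^ j)
      = δ * (∑' j : ℕ, bc δ j * y ^ j) + ∑' j : ℕ, (bc δ j * j) * y ^ j := by
    rw [← tsum_mul_left, ← Summable.tsum_add hsum1 hsum2]
    apply tsum_congr
    intro j
    ring
  have expand : (1 - y) * D = D - y * D := by ring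
  linarith [key, hDe, hyD, expand]

lemma binomial_tsum {δ : ℝ} (hδ : 0 < δ) {x : ℝ} (hx : |x| < 1) :
    ∑' j : ℕ, bc δ j * x ^ j = (1 - x) ^ (-δ) := by
  set f : ℝ → ℝ := fun z => ∑' j : ℕ, bc δ j * z ^ j with hf
  set F : ℝ → ℝ := fun z => f z * (1 - z) ^ δ with hFdef
  have hF' : ∀ y : ℝ, |y| < 1 → HasDerivAt F 0 y := by
    intro y hy
    have h1y : (0:ℝ) < 1 - y := by
      have := abs_lt.mp hy; linarith [this.2]
    have hd1 : HasDerivAt f (∑' j : ℕ, bc δ j * ((j : ℝ) * y ^ (j - 1))) y :=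
      hasDerivAt_bcsum hδ hy
    have hd2 : HasDerivAt (fun z : ℝ => (1 - z) ^ δ) (δ * (1 - y) ^ (δ - 1) * (-1)) y := by
      have hbase : HasDerivAt (fun z : ℝ => 1 - z) (-1) y := by
        simpa using (hasDerivAt_id y).const_sub 1
      exact (Real.hasDerivAt_rpow_const (Or.inl h1y.ne')).comp y hbase
    have htot := hd1.mul hd2
    refine htot.congr_deriv (Eq.symm ?_)
    have hode := bcsum_ode hδ hy
    have hpow : (1 - y) ^ δ = (1 - y) ^ (δ - 1) * (1 - y) := by
      rw [← Real.rpow_add_one h1y.ne' (δ - 1), sub_add_cancel]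
    rw [hpow]
    linear_combination (-((1:ℝ) - y) ^ (δ - 1)) * hode
  have hcont : ∀ y : ℝ, |y| < 1 → ContinuousAt F y := fun y hy => (hF' y hy).continuousAt
  have hF1 : ∀ y : ℝ, |y| < 1 → F y = F 0 := by
    intro y hy
    rcases le_total 0 y with h0y | h0y
    · have habs : ∀ t ∈ Icc (0:ℝ) y, |t| < 1 := by
        intro t ht
        rw [abs_of_nonneg ht.1]
        exact lt_of_le_of_lt (ht.2.trans (le_abs_self y)) hy
      have := constant_of_has_deriv_right_zero (f := F) (a := 0) (b := y)
        (fun t ht => (hcont t (habs t ht)).continuousWithinAt)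
        (fun t ht => (hF' t (habs t (Ico_subset_Icc_self ht))).hasDerivWithinAt)
      exact this y (right_mem_Icc.mpr h0y)
    · have habs : ∀ t ∈ Icc y (0:ℝ), |t| < 1 := by
        intro t ht
        have : |t| ≤ |y| := abs_le.mpr ⟨le_trans (neg_abs_le y) ht.1,
          le_trans ht.2 (abs_nonneg y)⟩
        exact lt_of_le_of_lt this hy
      have := constant_of_has_deriv_right_zero (f := F) (a := y) (b := 0)
        (fun t ht => (hcont t (habs t ht)).continuousWithinAt)
        (fun t ht => (hF' t (habs t (Ico_subset_Icc_self ht))).hasDerivWithinAt)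
      exact (this 0 (right_mem_Icc.mpr h0y)).symm
  have hf0 : f 0 = 1 := by
    have : f 0 = ∑' j : ℕ, bc δ j * (0:ℝ) ^ j := rfl
    rw [this, tsum_eq_single 0 (fun j hj => by simp [zero_pow hj])]
    simp [bc_zero]
  have hF0 : F 0 = 1 := by
    have : F 0 = f 0 * (1 - 0 : ℝ) ^ δ := rfl
    rw [this, hf0]
    norm_num
  have h1x : (0:ℝ) < 1 - x := by
    have := abs_lt.mp hx; linarith [this.2]
  have hFx : f x * (1 - x) ^ δ = 1 := (hF1 x hx).trans hF0
  have hxpos : (0:ℝ) < (1 - x) ^ δ := Real.rpow_pos_of_pos h1x δ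
  have hfx : f x = 1 / (1 - x) ^ δ := eq_div_of_mul_eq hxpos.ne' hFx
  rw [show (∑' j : ℕ, bc δ j * x ^ j) = f x from rfl, hfx, Real.rpow_neg h1x.le, one_div]

/-- Laplace transform of `t ↦ t^{γ-1} E^δ_{β,γ}(ω t^β)`:
for real `β, γ, δ > 0`, `ω ∈ ℝ` and `s > |ω|^{1/β}`,
`∫_0^∞ e^{-st} t^{γ-1} E^δ_{β,γ}(ω t^β) dt = s^{-γ} (1 - ω s^{-β})^{-δ}`. -/
theorem laplace_generalized_mittagLeffler (β γ δ ω : ℝ)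
    (hβ : 0 < β) (hγ : 0 < γ) (hδ : 0 < δ) (s : ℝ)
    (hs : |ω| ^ (1 / β) < s) :
    ∫ t in Ioi (0 : ℝ), Real.exp (-s * t) * t ^ (γ - 1) *
        (∑' j : ℕ, (∏ i ∈ Finset.range j, (δ + i)) * (ω * t ^ β) ^ j /
          ((j.factorial : ℝ) * Real.Gamma (β * j + γ)))
      = s ^ (-γ) * (1 - ω * s ^ (-β)) ^ (-δ) := by
  have hs0 : 0 < s := lt_of_le_of_lt (Real.rpow_nonneg (abs_nonneg ω) _) hs
  have hsβ : |ω| < s ^ β := by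
    have h := Real.rpow_lt_rpow (Real.rpow_nonneg (abs_nonneg ω) _) hs hβ
    rwa [← Real.rpow_mul (abs_nonneg ω), one_div_mul_cancel hβ.ne', Real.rpow_one] at h
  have hsb_pos : (0:ℝ) < s ^ β := Real.rpow_pos_of_pos hs0 β
  set x : ℝ := ω * s ^ (-β) with hxdef
  have hx : |x| < 1 := by
    rw [hxdef, abs_mul, abs_of_pos (Real.rpow_pos_of_pos hs0 (-β)), Real.rpow_neg hs0.le,
      ← div_eq_mul_inv, div_lt_one hsb_pos]
    exact hsβ
  set P : ℕ → ℝ := fun j => ∏ i ∈ Finset.range j, (δ + (i:ℝ)) with hP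
  have hPpos : ∀ j, 0 < P j := fun j =>
    Finset.prod_pos fun i _ => add_pos_of_pos_of_nonneg hδ (Nat.cast_nonneg i)
  set p : ℕ → ℝ := fun j => β * j + γ with hp
  have hppos : ∀ j, 0 < p j := fun j =>
    add_pos_of_nonneg_of_pos (mul_nonneg hβ.le (Nat.cast_nonneg j)) hγ
  have hΓpos : ∀ j, 0 < Real.Gamma (p j) := fun j => Real.Gamma_pos_of_pos (hppos j)
  set C : ℕ → ℝ := fun j => P j * ω ^ j / ((j.factorial : ℝ) * Real.Gamma (p j)) with hC
  set F : ℕ → ℝ → ℝ := fun j t => Real.exp (-s * t) * t ^ (γ - 1) *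
      (P j * (ω * t ^ β) ^ j / ((j.factorial : ℝ) * Real.Gamma (p j))) with hF
  have hpt : ∀ j : ℕ, ∀ t ∈ Ioi (0:ℝ),
      F j t = C j * (t ^ (p j - 1) * Real.exp (-(s * t))) := by
    intro j t ht
    have ht0 : (0:ℝ) < t := ht
    have h1 : (ω * t ^ β) ^ j = ω ^ j * t ^ (β * j) := by
      rw [mul_pow, ← Real.rpow_natCast (t ^ β) j, ← Real.rpow_mul ht0.le]
    have h2 : t ^ (γ - 1) * t ^ (β * (j:ℝ)) = t ^ (p j - 1) := by
      rw [← Real.rpow_add ht0]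
      congr 1
      simp only [hp]
      ring
    simp only [hF, hC]
    rw [h1, neg_mul, ← h2]
    ring
  have hbase : ∀ q : ℝ, 0 < q →
      IntegrableOn (fun t : ℝ => t ^ (q - 1) * Real.exp (-(s * t))) (Ioi 0) := by
    intro q hq
    have h := integrableOn_rpow_mul_exp_neg_mul_rpow (s := q - 1) (p := 1) (b := s)
      (by linarith) one_pos hs0
    refine h.congr_fun (fun t ht => ?_) measurableSet_Ioi
    simp only [Real.rpow_one, neg_mul]
  have hint : ∀ j, IntegrableOn (F j) (Ioi 0) := fun j =>
    IntegrableOn.congr_fun ((hbase (p j) (hppos j)).const_mul (C j))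
      (fun t ht => (hpt j t ht).symm) measurableSet_Ioi
  have hkey : ∀ c q : ℝ, 0 < q →
      (∫ t in Ioi (0:ℝ), c * (t ^ (q - 1) * Real.exp (-(s * t))))
        = c * (s ^ (-q) * Real.Gamma q) := by
    intro c q hq
    rw [MeasureTheory.integral_const_mul, Real.integral_rpow_mul_exp_neg_mul_Ioi hq hs0,
      one_div, Real.inv_rpow hs0.le, ← Real.rpow_neg hs0.le]
  have hsplit : ∀ j : ℕ, s ^ (-(p j)) = (s ^ (-β)) ^ j * s ^ (-γ) := by
    intro j
    simp only [hp]
    rw [show -(β * (j:ℝ) + γ) = (-β) * j + (-γ) by ring, Real.rpow_add hs0,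
      ← Real.rpow_natCast (s ^ (-β)) j, ← Real.rpow_mul hs0.le]
  have hfac : ∀ j : ℕ, ((j.factorial:ℝ)) ≠ 0 := fun j => by
    exact_mod_cast j.factorial_ne_zero
  have hval : ∀ j : ℕ, (∫ t in Ioi (0:ℝ), F j t) = s ^ (-γ) * (bc δ j * x ^ j) := by
    intro j
    rw [setIntegral_congr_fun measurableSet_Ioi (fun t ht => hpt j t ht),
      hkey (C j) (p j) (hppos j), hsplit j]
    simp only [hC, hxdef, bc, ← hP, mul_pow]
    field_simp [hfac j, (hΓpos j).ne']
    ring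
  have habs : ∀ j : ℕ, (∫ t in Ioi (0:ℝ), ‖F j t‖) = s ^ (-γ) * (bc δ j * |x| ^ j) := by
    intro j
    have hnorm : ∀ t ∈ Ioi (0:ℝ),
        ‖F j t‖ = |C j| * (t ^ (p j - 1) * Real.exp (-(s * t))) := by
      intro t ht
      have ht0 : (0:ℝ) < t := ht
      rw [hpt j t ht, Real.norm_eq_abs, abs_mul,
        abs_of_pos (mul_pos (Real.rpow_pos_of_pos ht0 _) (Real.exp_pos _))]
    rw [setIntegral_congr_fun measurableSet_Ioi (fun t ht => hnorm t ht),
      hkey (|C j|) (p j) (hppos j), hsplit j]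
    have hCabs : |C j| = P j * |ω| ^ j / ((j.factorial:ℝ) * Real.Gamma (p j)) := by
      simp only [hC]
      rw [abs_div, abs_mul, abs_mul, abs_pow, abs_of_pos (hPpos j), abs_of_pos (hΓpos j),
        abs_of_pos (by exact_mod_cast j.factorial_pos : (0:ℝ) < (j.factorial:ℝ))]
    have hxabs : |x| = |ω| * s ^ (-β) := by
      rw [hxdef, abs_mul, abs_of_pos (Real.rpow_pos_of_pos hs0 (-β))]
    rw [hCabs, hxabs]
    simp only [bc, ← hP, mul_pow]
    field_simp [hfac j, (hΓpos j).ne']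
    ring
  have hsummable : Summable (fun j : ℕ => ∫ t in Ioi (0:ℝ), ‖F j t‖) := by
    simp only [habs]
    exact ((bc_summable hδ (by rwa [abs_abs])).mul_left _)
  have hswap := MeasureTheory.integral_tsum_of_summable_integral_norm
    (μ := (volume : Measure ℝ).restrict (Ioi 0)) (F := F) hint hsummable
  calc ∫ t in Ioi (0:ℝ), Real.exp (-s * t) * t ^ (γ - 1) *
        (∑' j : ℕ, P j * (ω * t ^ β) ^ j / ((j.factorial : ℝ) * Real.Gamma (β * j + γ)))
      = ∫ t in Ioi (0:ℝ), ∑' j : ℕ, F j t := by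
        apply setIntegral_congr_fun measurableSet_Ioi
        intro t ht
        simp only [hF, hp]
        rw [← tsum_mul_left]
    _ = ∑' j : ℕ, ∫ t in Ioi (0:ℝ), F j t := hswap.symm
    _ = ∑' j : ℕ, s ^ (-γ) * (bc δ j * x ^ j) := tsum_congr fun j => hval j
    _ = s ^ (-γ) * ∑' j : ℕ, bc δ j * x ^ j := tsum_mul_left
    _ = s ^ (-γ) * (1 - x) ^ (-δ) := by rw [binomial_tsum hδ hx]
end

section
/- For 0 < β₁ < β₂ < 1 and c₁, c₂ > 0, the function t ↦ (1/c₂) t^{β₂} E_{β₂−β₁, β₂+1}(−(c₁/c₂) t^{β₂−β₁}) has Laplace transform λ ↦ 1/(c₁ λ^{β₁+1} + c₂ λ^{β₂+1}) for λ > 0. -/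
open MeasureTheory Real Set Filter

namespace MLProof

/-- Continuity of `x ↦ x ^ p` for nonneg exponent. -/
lemma cont_rpow {p : ℝ} (hp : 0 ≤ p) : Continuous fun x : ℝ => x ^ p :=
  continuous_iff_continuousAt.mpr fun x => Real.continuousAt_rpow_const x p (Or.inr hp)

/-- Log-convexity lower bound: `Γ(x) (x-1)^a ≤ Γ(x+a)` for `x ≥ 2`, `a > 0`. -/
lemma gamma_ratio {x a : ℝ} (hx : 2 ≤ x) (ha : 0 < a) :
    Real.Gamma x * (x - 1) ^ a ≤ Real.Gamma (x + a) := by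
  have hx1 : (0:ℝ) < x - 1 := by linarith
  have hΓx : 0 < Real.Gamma x := Real.Gamma_pos_of_pos (by linarith)
  have hΓx1 : 0 < Real.Gamma (x - 1) := Real.Gamma_pos_of_pos hx1
  have hΓxa : 0 < Real.Gamma (x + a) := Real.Gamma_pos_of_pos (by linarith)
  have hs := Real.convexOn_log_Gamma.slope_mono_adjacent
    (mem_Ioi.mpr hx1) (mem_Ioi.mpr (show (0:ℝ) < x + a by linarith))
    (show x - 1 < x by linarith) (show x < x + a by linarith)
  have hrec : Real.Gamma x = (x - 1) * Real.Gamma (x - 1) := by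
    have := Real.Gamma_add_one (ne_of_gt hx1)
    rw [sub_add_cancel] at this
    exact this
  have hlog : (Real.log ∘ Real.Gamma) x - (Real.log ∘ Real.Gamma) (x - 1) = Real.log (x - 1) := by
    simp only [Function.comp_apply]
    rw [hrec, Real.log_mul (ne_of_gt hx1) (ne_of_gt hΓx1)]
    ring
  have h2 : Real.log (x - 1) ≤ ((Real.log ∘ Real.Gamma) (x + a) - (Real.log ∘ Real.Gamma) x) / a := by
    have hxx : x - (x - 1) = 1 := by ring
    rw [hxx, div_one, hlog] at hs
    have hyy : x + a - x = a := by ring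
    rw [hyy] at hs
    exact hs
  have h3 : a * Real.log (x - 1) + Real.log (Real.Gamma x) ≤ Real.log (Real.Gamma (x + a)) := by
    have := (le_div_iff₀ ha).mp h2
    simp only [Function.comp_apply] at this ⊢
    linarith
  calc Real.Gamma x * (x - 1) ^ a
      = Real.exp (a * Real.log (x - 1) + Real.log (Real.Gamma x)) := by
        rw [Real.exp_add, Real.rpow_def_of_pos hx1, Real.exp_log hΓx]; ring
    _ ≤ Real.exp (Real.log (Real.Gamma (x + a))) := Real.exp_le_exp.mpr h3
    _ = Real.Gamma (x + a) := Real.exp_log hΓxa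


noncomputable def mlT (α b c : ℝ) (j : ℕ) (t : ℝ) : ℝ :=
  (-c) ^ j * t ^ (α * j + b) / Real.Gamma (α * j + b + 1)

noncomputable def mlF (α b c : ℝ) (t : ℝ) : ℝ := ∑' j : ℕ, mlT α b c j t

/-- Ratio-test summability of `C^j / Γ(αj+b+1)`. -/
lemma summable_aux {α b : ℝ} (hα : 0 < α) (hb : 0 < b) {C : ℝ} (hC : 0 ≤ C) :
    Summable (fun j : ℕ => C ^ j / Real.Gamma (α * j + b + 1)) := by
  apply summable_of_ratio_norm_eventually_le (r := 1/2) (by norm_num)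
  have h1 : Tendsto (fun j : ℕ => α * j + b) atTop atTop := by
    apply Filter.tendsto_atTop_add_const_right
    exact (tendsto_natCast_atTop_atTop).const_mul_atTop hα
  have h2 : Tendsto (fun j : ℕ => (α * j + b) ^ α) atTop atTop :=
    (tendsto_rpow_atTop hα).comp h1
  filter_upwards [h1.eventually_ge_atTop 1, h2.eventually_ge_atTop (2 * C)] with j hj1 hj2
  have hx2 : 2 ≤ α * j + b + 1 := by linarith
  have hxpos : 0 < α * j + b + 1 := by linarith
  have hΓ : 0 < Real.Gamma (α * j + b + 1) := Real.Gamma_pos_of_pos hxpos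
  have hΓ' : 0 < Real.Gamma (α * j + b + 1 + α) := Real.Gamma_pos_of_pos (by linarith)
  have hkey : 2 * C * Real.Gamma (α * j + b + 1) ≤ Real.Gamma (α * j + b + 1 + α) := by
    calc 2 * C * Real.Gamma (α * j + b + 1)
        ≤ (α * j + b) ^ α * Real.Gamma (α * j + b + 1) := by
          apply mul_le_mul_of_nonneg_right hj2 hΓ.le
      _ = Real.Gamma (α * j + b + 1) * (α * j + b + 1 - 1) ^ α := by ring_nf
      _ ≤ Real.Gamma (α * j + b + 1 + α) := gamma_ratio hx2 hα
  have harg : α * (j + 1 : ℕ) + b + 1 = α * j + b + 1 + α := by push_cast; ring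
  rw [harg]
  have hnn : ∀ k : ℕ, 0 ≤ C ^ k / Real.Gamma (α * k + b + 1) := fun k =>
    div_nonneg (pow_nonneg hC k) (Real.Gamma_nonneg_of_nonneg (by positivity))
  rw [Real.norm_of_nonneg (by
    exact div_nonneg (pow_nonneg hC (j+1)) hΓ'.le),
    Real.norm_of_nonneg (hnn j)]
  rw [div_le_iff₀ hΓ']
  have e1 : 1/2 * (C ^ j / Real.Gamma (α * j + b + 1)) * Real.Gamma (α * j + b + 1 + α)
      = (C ^ j * Real.Gamma (α * j + b + 1 + α)) / (2 * Real.Gamma (α * j + b + 1)) := by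
    ring
  rw [e1, le_div_iff₀ (by positivity)]
  calc C ^ (j+1) * (2 * Real.Gamma (α * j + b + 1))
      = C ^ j * (2 * C * Real.Gamma (α * j + b + 1)) := by ring
    _ ≤ C ^ j * Real.Gamma (α * j + b + 1 + α) :=
        mul_le_mul_of_nonneg_left hkey (pow_nonneg hC j)

/-- Uniform bound for terms on `[0,T]`. -/
lemma mlT_bound {α b c : ℝ} (hα : 0 < α) (hb : 0 < b) (hc : 0 < c) {T : ℝ} (hT : 0 < T)
    {t : ℝ} (ht : t ∈ Icc (0:ℝ) T) (j : ℕ) :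
    ‖mlT α b c j t‖ ≤ T ^ b * ((c * T ^ α) ^ j / Real.Gamma (α * j + b + 1)) := by
  have hΓ : 0 < Real.Gamma (α * j + b + 1) := Real.Gamma_pos_of_pos (by positivity)
  have habs : ‖mlT α b c j t‖ = c ^ j * t ^ (α * j + b) / Real.Gamma (α * j + b + 1) := by
    rw [mlT, Real.norm_eq_abs, abs_div, abs_of_pos hΓ, abs_mul, abs_pow, abs_neg,
      abs_of_pos hc, abs_of_nonneg (Real.rpow_nonneg ht.1 _)]
  rw [habs]
  have hTp : T ^ (α * j + b) = (T ^ α) ^ j * T ^ b := by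
    rw [Real.rpow_add hT, Real.rpow_mul hT.le, Real.rpow_natCast]
  have ht' : t ^ (α * j + b) ≤ T ^ (α * j + b) :=
    Real.rpow_le_rpow ht.1 ht.2 (by positivity)
  have h3 : c ^ j * t ^ (α * j + b) ≤ T ^ b * (c * T ^ α) ^ j := by
    rw [mul_pow]
    calc c ^ j * t ^ (α * j + b) ≤ c ^ j * ((T ^ α) ^ j * T ^ b) :=
          mul_le_mul_of_nonneg_left (ht'.trans_eq hTp) (by positivity)
      _ = T ^ b * (c ^ j * (T ^ α) ^ j) := by ring
  rw [← mul_div_assoc]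
  gcongr

/-- The uniform bound sequence is summable. -/
lemma summable_bound {α b c : ℝ} (hα : 0 < α) (hb : 0 < b) (hc : 0 < c) {T : ℝ} (hT : 0 < T) :
    Summable (fun j : ℕ => T ^ b * ((c * T ^ α) ^ j / Real.Gamma (α * j + b + 1))) :=
  (summable_aux hα hb (by positivity)).mul_left _

/-- Pointwise summability of the series. -/
lemma mlT_summable {α b c : ℝ} (hα : 0 < α) (hb : 0 < b) (hc : 0 < c) {t : ℝ} (ht : 0 ≤ t) :
    Summable (fun j : ℕ => mlT α b c j t) := by
  apply Summable.of_norm_bounded (summable_bound hα hb hc (T := t + 1) (by linarith))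
  intro j
  exact mlT_bound hα hb hc (by linarith) ⟨ht, by linarith⟩ j

lemma mlT_continuous {α b c : ℝ} (hα : 0 < α) (hb : 0 < b) (j : ℕ) :
    Continuous (mlT α b c j) := by
  unfold mlT
  exact (continuous_const.mul (cont_rpow (by positivity))).div_const _

lemma mlF_zero {α b c : ℝ} (hα : 0 < α) (hb : 0 < b) : mlF α b c 0 = 0 := by
  unfold mlF
  have : ∀ j : ℕ, mlT α b c j 0 = 0 := by
    intro j
    unfold mlT
    rw [Real.zero_rpow (by positivity)]
    simp
  simp [this]

lemma mlF_contOn {α b c : ℝ} (hα : 0 < α) (hb : 0 < b) (hc : 0 < c) :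
    ContinuousOn (mlF α b c) (Ici 0) := by
  have key : ∀ T : ℝ, 0 < T → ContinuousOn (mlF α b c) (Icc 0 T) := by
    intro T hT
    apply continuousOn_tsum (fun j => (mlT_continuous hα hb j).continuousOn)
      (summable_bound hα hb hc hT)
    intro j t ht
    exact mlT_bound hα hb hc hT ht j
  intro x hx
  have hmem : Icc (0:ℝ) (x + 1) ∈ nhdsWithin x (Ici 0) := by
    rw [← Ici_inter_Iic]
    exact Filter.inter_mem self_mem_nhdsWithin
      (mem_nhdsWithin_of_mem_nhds (Iic_mem_nhds (lt_add_one x)))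
  have hx' : (0:ℝ) ≤ x := hx
  exact ((key (x+1) (by linarith)).continuousWithinAt
    ⟨hx', by linarith⟩).mono_of_mem_nhdsWithin hmem

/-- Real Beta integral on `(0,t)`. -/
lemma beta_aux {u v t : ℝ} (hu : 0 < u) (hv : 0 < v) (ht : 0 < t) :
    ∫ s in Ioo (0:ℝ) t, s ^ (u-1) * (t-s) ^ (v-1) =
      Real.Gamma u * Real.Gamma v / Real.Gamma (u+v) * t ^ (u+v-1) := by
  have hΓ : (0:ℝ) < Real.Gamma (u+v) := Real.Gamma_pos_of_pos (by linarith)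
  have h1 := Complex.Gamma_mul_Gamma_eq_betaIntegral
      (s := (u:ℂ)) (t := (v:ℂ)) (by simpa using hu) (by simpa using hv)
  have h2 := Complex.betaIntegral_scaled (u:ℂ) (v:ℂ) ht
  -- identify the complex interval integral with the real one
  have h3 : (∫ x in (0:ℝ)..t, (x:ℂ) ^ ((u:ℂ) - 1) * ((t:ℂ) - x) ^ ((v:ℂ) - 1))
      = ((∫ x in (0:ℝ)..t, x ^ (u-1) * (t-x) ^ (v-1) : ℝ) : ℂ) := by
    rw [← intervalIntegral.integral_ofReal]
    apply intervalIntegral.integral_congr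
    intro x hx
    rw [uIcc_of_le ht.le] at hx
    have hx0 : (0:ℝ) ≤ x := hx.1
    have hx1 : (0:ℝ) ≤ t - x := by linarith [hx.2]
    push_cast
    rw [Complex.ofReal_cpow hx0, Complex.ofReal_cpow hx1]
    push_cast
    ring
  have hbeta : Complex.betaIntegral u v
      = ((Real.Gamma u * Real.Gamma v / Real.Gamma (u+v) : ℝ) : ℂ) := by
    have hG : Complex.Gamma ((u:ℂ) + (v:ℂ)) = ((Real.Gamma (u+v) : ℝ) : ℂ) := by
      rw [← Complex.ofReal_add, Complex.Gamma_ofReal]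
    have hGu : Complex.Gamma (u:ℂ) = ((Real.Gamma u : ℝ) : ℂ) := Complex.Gamma_ofReal u
    have hGv : Complex.Gamma (v:ℂ) = ((Real.Gamma v : ℝ) : ℂ) := Complex.Gamma_ofReal v
    have hne : ((Real.Gamma (u+v) : ℝ) : ℂ) ≠ 0 := by exact_mod_cast hΓ.ne'
    rw [hGu, hGv, hG] at h1
    push_cast
    rw [eq_div_iff hne]
    linear_combination -h1
  have h4 : ((∫ x in (0:ℝ)..t, x ^ (u-1) * (t-x) ^ (v-1) : ℝ) : ℂ)
      = ((t ^ (u+v-1) * (Real.Gamma u * Real.Gamma v / Real.Gamma (u+v)) : ℝ) : ℂ) := by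
    rw [← h3, h2, hbeta, Complex.ofReal_mul, Complex.ofReal_cpow ht.le]
    push_cast
    ring
  have h5 := Complex.ofReal_inj.mp h4
  rw [intervalIntegral.integral_of_le ht.le, integral_Ioc_eq_integral_Ioo] at h5
  rw [h5]; ring

/-- Kernel integrability on `Ioc y x`. -/
lemma ker_int {r : ℝ} (hr : -1 < r) {x y : ℝ} (hyx : y ≤ x) :
    IntegrableOn (fun s => (x - s) ^ r) (Ioc y x) := by
  have h := (intervalIntegral.intervalIntegrable_rpow' (a := 0) (b := x - y) hr).comp_sub_left x
  simp only [sub_zero, sub_sub_cancel] at h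
  exact (intervalIntegrable_iff_integrableOn_Ioc_of_le hyx).mp h.symm

/-- Kernel integral value. -/
lemma ker_val {r : ℝ} (hr : -1 < r) {x y : ℝ} (hyx : y ≤ x) :
    ∫ s in Ioc y x, (x - s) ^ r = (x - y) ^ (r+1) / (r+1) := by
  rw [← intervalIntegral.integral_of_le hyx]
  rw [intervalIntegral.integral_comp_sub_left (fun s => s ^ r) x]
  rw [sub_self]
  rw [integral_rpow (Or.inl hr)]
  rw [Real.zero_rpow (by linarith : r + 1 ≠ 0)]
  ring

lemma mlT_intOn {α b c : ℝ} (hα : 0 < α) (hb : 0 < b) (hc : 0 < c) {t : ℝ} (ht : 0 < t)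
    (j : ℕ) : IntegrableOn (fun s => mlT α b c j s * (t-s) ^ (α-1)) (Ioo 0 t) := by
  apply Integrable.bdd_mul (c := t ^ b * ((c * t ^ α) ^ j / Real.Gamma (α * j + b + 1)))
  · exact ((ker_int (by linarith) ht.le).mono_set Ioo_subset_Ioc_self)
  · exact (mlT_continuous hα hb j).aestronglyMeasurable.restrict
  · rw [ae_restrict_iff' measurableSet_Ioo]
    exact Eventually.of_forall fun s hs => mlT_bound hα hb hc ht ⟨hs.1.le, hs.2.le⟩ j

lemma ker_Ioo_val {α : ℝ} (hα : 0 < α) {x y : ℝ} (hyx : y ≤ x) :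
    ∫ s in Ioo y x, (x - s) ^ (α-1) = (x - y) ^ α / α := by
  rw [← integral_Ioc_eq_integral_Ioo, ker_val (by linarith) hyx]
  norm_num

lemma volterra {α b c : ℝ} (hα : 0 < α) (hb : 0 < b) (hc : 0 < c) {t : ℝ} (ht : 0 < t) :
    ∫ s in Ioo (0:ℝ) t, mlF α b c s * (t-s) ^ (α-1)
      = Real.Gamma α / (-c) * (mlF α b c t - t ^ b / Real.Gamma (b+1)) := by
  have hkerInt : IntegrableOn (fun s => (t - s) ^ (α-1)) (Ioo 0 t) :=
    (ker_int (by linarith) ht.le).mono_set Ioo_subset_Ioc_self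
  -- step 1 : swap integral and sum
  have hswap : ∫ s in Ioo (0:ℝ) t, mlF α b c s * (t-s) ^ (α-1)
      = ∑' j : ℕ, ∫ s in Ioo (0:ℝ) t, mlT α b c j s * (t-s) ^ (α-1) := by
    simp only [mlF]
    rw [setIntegral_congr_fun measurableSet_Ioo
      (fun s _ => (tsum_mul_right (f := fun j => mlT α b c j s)).symm)]
    refine (integral_tsum_of_summable_integral_norm (fun j => mlT_intOn hα hb hc ht j) ?_).symm
    apply Summable.of_nonneg_of_le (fun j => integral_nonneg fun s => norm_nonneg _)
      (fun j => ?_) ((summable_bound hα hb hc ht).mul_right (t ^ α / α))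
    calc ∫ s in Ioo (0:ℝ) t, ‖mlT α b c j s * (t-s) ^ (α-1)‖
        ≤ ∫ s in Ioo (0:ℝ) t,
            (t ^ b * ((c * t ^ α) ^ j / Real.Gamma (α * j + b + 1))) * (t-s) ^ (α-1) := by
          apply setIntegral_mono_on ((mlT_intOn hα hb hc ht j).norm)
            (hkerInt.const_mul _) measurableSet_Ioo
          intro s hs
          have hker : (0:ℝ) ≤ (t-s) ^ (α-1) := Real.rpow_nonneg (by linarith [hs.2]) _
          rw [norm_mul, Real.norm_eq_abs ((t-s)^(α-1)), abs_of_nonneg hker]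
          exact mul_le_mul_of_nonneg_right (mlT_bound hα hb hc ht ⟨hs.1.le, hs.2.le⟩ j) hker
      _ = (t ^ b * ((c * t ^ α) ^ j / Real.Gamma (α * j + b + 1))) * (t ^ α / α) := by
          rw [integral_const_mul, ker_Ioo_val hα ht.le, sub_zero]
  rw [hswap]
  -- step 2 : evaluate each term
  have hstep : ∀ j : ℕ, ∫ s in Ioo (0:ℝ) t, mlT α b c j s * (t-s) ^ (α-1)
      = Real.Gamma α / (-c) * mlT α b c (j+1) t := by
    intro j
    have hu : (0:ℝ) < α * j + b + 1 := by positivity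
    have hbeta := beta_aux (u := α * j + b + 1) (v := α) hu hα ht
    have he1 : α * j + b + 1 - 1 = α * j + b := by ring
    rw [he1] at hbeta
    have hcong : ∀ s ∈ Ioo (0:ℝ) t, mlT α b c j s * (t-s) ^ (α-1)
        = ((-c) ^ j / Real.Gamma (α * j + b + 1)) * (s ^ (α * j + b) * (t-s) ^ (α-1)) := by
      intro s _
      rw [mlT]; ring
    rw [setIntegral_congr_fun measurableSet_Ioo hcong, integral_const_mul, hbeta]
    have hΓu : Real.Gamma (α * j + b + 1) ≠ 0 := (Real.Gamma_pos_of_pos hu).ne'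
    have hΓq : Real.Gamma (α * j + b + 1 + α) ≠ 0 :=
      (Real.Gamma_pos_of_pos (by positivity)).ne'
    have he2 : α * ((j:ℕ) + 1 : ℕ) + b = α * j + b + 1 + α - 1 := by push_cast; ring
    have he3 : α * ((j:ℕ) + 1 : ℕ) + b + 1 = α * j + b + 1 + α := by push_cast; ring
    rw [mlT, he2, pow_succ]
    have he4 : α * ↑j + b + 1 + α - 1 + 1 = α * ↑j + b + 1 + α := by ring
    rw [he4]
    field_simp
  rw [tsum_congr hstep, tsum_mul_left]
  -- step 3 : shift summation index
  have hshift := Summable.tsum_eq_zero_add (mlT_summable hα hb hc ht.le (c := c))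
  have h0 : mlT α b c 0 t = t ^ b / Real.Gamma (b+1) := by
    rw [mlT]; norm_num
  rw [mlF, hshift, h0]
  ring
/-- Solved form of the Volterra equation. -/
lemma volterra' {α b c : ℝ} (hα : 0 < α) (hb : 0 < b) (hc : 0 < c) {t : ℝ} (ht : 0 ≤ t) :
    mlF α b c t = t ^ b / Real.Gamma (b+1)
      - c / Real.Gamma α * ∫ s in Ioo (0:ℝ) t, mlF α b c s * (t-s) ^ (α-1) := by
  rcases eq_or_lt_of_le ht with rfl | ht'
  · rw [mlF_zero hα hb, Real.zero_rpow hb.ne']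
    simp
  · rw [volterra hα hb hc ht']
    have hΓ : Real.Gamma α ≠ 0 := (Real.Gamma_pos_of_pos hα).ne'
    field_simp
    ring

set_option maxHeartbeats 4000000 in
/-- Positivity: the heart of the proof. -/
lemma mlF_nonneg {α b c : ℝ} (hα : 0 < α) (hα1 : α ≤ 1) (hb : 0 < b) (hc : 0 < c) :
    ∀ t : ℝ, 0 ≤ t → 0 ≤ mlF α b c t := by
  by_contra hneg
  push_neg at hneg
  obtain ⟨t₂, ht₂0, ht₂⟩ := hneg
  have hcont : ContinuousOn (mlF α b c) (Ici 0) := mlF_contOn hα hb hc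
  have hSne : {x : ℝ | 0 ≤ x ∧ mlF α b c x < 0}.Nonempty := ⟨t₂, ht₂0, ht₂⟩
  have hSbdd : BddBelow {x : ℝ | 0 ≤ x ∧ mlF α b c x < 0} := ⟨0, fun x hx => hx.1⟩
  set τ := sInf {x : ℝ | 0 ≤ x ∧ mlF α b c x < 0} with hτ
  have hτ0 : 0 ≤ τ := le_csInf hSne fun x hx => hx.1
  have hτleft : ∀ s, 0 ≤ s → s < τ → 0 ≤ mlF α b c s := by
    intro s hs hsτ
    by_contra h
    push_neg at h
    exact absurd (csInf_le hSbdd ⟨hs, h⟩) (not_le.mpr hsτ)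
  have hτnonneg : 0 ≤ mlF α b c τ := by
    rcases eq_or_lt_of_le hτ0 with h0τ | hτpos
    · rw [← h0τ, mlF_zero hα hb]
    · have hcw : ContinuousWithinAt (mlF α b c) (Ioo 0 τ) τ :=
        (hcont τ (mem_Ici.mpr hτ0)).mono (fun x hx => le_of_lt hx.1)
      have : NeBot (nhdsWithin τ (Ioo 0 τ)) := right_nhdsWithin_Ioo_neBot hτpos
      refine ge_of_tendsto hcw ?_
      filter_upwards [self_mem_nhdsWithin] with s hs
      exact hτleft s hs.1.le hs.2
  have hΓα : 0 < Real.Gamma α := Real.Gamma_pos_of_pos hα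
  have hΓα1 : 0 < Real.Gamma (α+1) := Real.Gamma_pos_of_pos (by linarith)
  set ε : ℝ := (Real.Gamma (α+1) / (2*c)) ^ (1/α) with hε
  have hε0 : 0 < ε := Real.rpow_pos_of_pos (by positivity) _
  have hεα : ε ^ α = Real.Gamma (α+1) / (2*c) := by
    rw [hε, ← Real.rpow_mul (by positivity), one_div, inv_mul_cancel₀ hα.ne', Real.rpow_one]
  obtain ⟨t₃, ht₃S, ht₃lt⟩ := exists_lt_of_csInf_lt hSne (lt_add_of_pos_right τ hε0)
  have hτt₃ : τ ≤ t₃ := csInf_le hSbdd ht₃S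
  have ht₃0 : 0 ≤ t₃ := ht₃S.1
  have hcontIcc : ContinuousOn (mlF α b c) (Icc τ t₃) := hcont.mono fun x hx => le_trans hτ0 hx.1
  obtain ⟨t₁, ht₁mem, ht₁min⟩ := isCompact_Icc.exists_isMinOn (nonempty_Icc.mpr hτt₃) hcontIcc
  have hmin : ∀ s ∈ Icc τ t₃, mlF α b c t₁ ≤ mlF α b c s := fun s hs => isMinOn_iff.mp ht₁min s hs
  have hm : mlF α b c t₁ < 0 := lt_of_le_of_lt (hmin t₃ ⟨hτt₃, le_refl _⟩) ht₃S.2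
  have ht₁0 : 0 ≤ t₁ := le_trans hτ0 ht₁mem.1
  have ht₁t₃ : t₁ ≤ t₃ := ht₁mem.2
  have hAclosed : IsClosed (Icc 0 t₁ ∩ (mlF α b c) ⁻¹' (Ici 0)) :=
    (hcont.mono (fun x hx => hx.1)).preimage_isClosed_of_isClosed isClosed_Icc isClosed_Ici
  have hAne : (Icc 0 t₁ ∩ (mlF α b c) ⁻¹' (Ici 0)).Nonempty := ⟨0, ⟨le_refl 0, ht₁0⟩, by
    simp only [mem_preimage, mlF_zero hα hb, mem_Ici, le_refl]⟩
  have hAbdd : BddAbove (Icc 0 t₁ ∩ (mlF α b c) ⁻¹' (Ici 0)) := ⟨t₁, fun x hx => hx.1.2⟩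
  set a := sSup (Icc 0 t₁ ∩ (mlF α b c) ⁻¹' (Ici 0)) with ha_def
  have haA : a ∈ Icc 0 t₁ ∩ (mlF α b c) ⁻¹' (Ici 0) := hAclosed.csSup_mem hAne hAbdd
  have ha0 : 0 ≤ a := haA.1.1
  have hat₁ : a ≤ t₁ := haA.1.2
  have hFa : 0 ≤ mlF α b c a := haA.2
  have halt : a < t₁ := lt_of_le_of_ne hat₁ (fun h => (not_le.mpr hm) (h ▸ hFa))
  have hτa : τ ≤ a := le_csSup hAbdd ⟨⟨hτ0, ht₁mem.1⟩, hτnonneg⟩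
  have ht₁τε : t₁ ≤ τ + ε := le_trans ht₁t₃ ht₃lt.le
  have hneg' : ∀ s, a < s → s ≤ t₁ → mlF α b c s < 0 := by
    intro s hs hst₁
    by_contra h
    push_neg at h
    exact absurd (le_csSup hAbdd ⟨⟨le_trans ha0 hs.le, hst₁⟩, h⟩) (not_le.mpr hs)
  have hnn0 : ∀ s, 0 ≤ s → s ≤ τ → 0 ≤ mlF α b c s := by
    intro s hs hsτ
    rcases eq_or_lt_of_le hsτ with h | h
    · rw [h]; exact hτnonneg
    · exact hτleft s hs h
  have hGmeasIoc : ∀ y z : ℝ, 0 ≤ y →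
      AEStronglyMeasurable (mlF α b c) (volume.restrict (Ioc y z)) := fun y z hy =>
    (hcont.mono (fun x hx => le_trans hy hx.1.le)).aestronglyMeasurable measurableSet_Ioc
  have hGmeasIoo : ∀ y z : ℝ, 0 ≤ y →
      AEStronglyMeasurable (mlF α b c) (volume.restrict (Ioo y z)) := fun y z hy =>
    (hcont.mono (fun x hx => le_trans hy hx.1.le)).aestronglyMeasurable measurableSet_Ioo
  obtain ⟨M, hM⟩ := (isCompact_Icc (a := (0:ℝ)) (b := t₃)).exists_bound_of_continuousOn
    (hcont.mono (fun x hx => hx.1))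
  have hkerIoo : ∀ y z x : ℝ, 0 ≤ y → z ≤ x →
      IntegrableOn (fun s => (x - s) ^ (α - 1)) (Ioo y z) := by
    intro y z x hy hzx
    rcases le_or_gt y z with hyz | hyz
    · exact (ker_int (by linarith) (le_trans hyz hzx)).mono_set
        (fun w hw => ⟨hw.1, le_trans hw.2.le hzx⟩)
    · rw [Ioo_eq_empty (by linarith)]
      simp [IntegrableOn]
  have hint_i : IntegrableOn (fun s => mlF α b c s * (t₁ - s) ^ (α - 1)) (Ioo 0 a) := by
    apply Integrable.bdd_mul (c := M)
    · exact hkerIoo 0 a t₁ (le_refl 0) hat₁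
    · exact hGmeasIoo 0 a (le_refl 0)
    · rw [ae_restrict_iff' measurableSet_Ioo]
      exact Eventually.of_forall fun s hs => hM s ⟨hs.1.le, by linarith [hs.2]⟩
  have hint_ii : IntegrableOn (fun s => mlF α b c s * (t₁ - s) ^ (α - 1)) (Ioc a t₁) := by
    apply Integrable.bdd_mul (c := M)
    · exact ker_int (by linarith) hat₁
    · exact hGmeasIoc a t₁ ha0
    · rw [ae_restrict_iff' measurableSet_Ioc]
      exact Eventually.of_forall fun s hs =>
        hM s ⟨le_trans ha0 hs.1.le, by linarith [hs.2]⟩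
  have hint_iii : IntegrableOn (fun s => mlF α b c s * (a - s) ^ (α - 1)) (Ioo 0 a) := by
    apply Integrable.bdd_mul (c := M)
    · exact hkerIoo 0 a a (le_refl 0) (le_refl a)
    · exact hGmeasIoo 0 a (le_refl 0)
    · rw [ae_restrict_iff' measurableSet_Ioo]
      exact Eventually.of_forall fun s hs => hM s ⟨hs.1.le, by linarith [hs.2]⟩
  have hint_i' : IntegrableOn (fun s => mlF α b c s * (t₁ - s) ^ (α - 1)) (Ioc 0 a) := by
    rw [integrableOn_Ioc_iff_integrableOn_Ioo]; exact hint_i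
  have hIooτa : Ioo τ a ⊆ Ioo 0 a := fun w hw => ⟨lt_of_le_of_lt hτ0 hw.1, hw.2⟩
  have hint_χ : IntegrableOn
      ((Ioo τ a).indicator (fun s => (a - s) ^ (α - 1) * (-(mlF α b c t₁)))) (Ioo 0 a) := by
    exact (IntegrableOn.integrable_indicator
      ((hkerIoo τ a a hτ0 (le_refl a)).mul_const _) measurableSet_Ioo).integrableOn
  have hptwise : ∀ s ∈ Ioo (0:ℝ) a, mlF α b c s * (t₁ - s) ^ (α - 1) - mlF α b c s * (a - s) ^ (α - 1)
      ≤ (Ioo τ a).indicator (fun s => (a - s) ^ (α - 1) * (-(mlF α b c t₁))) s := by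
    intro s hs
    have hsa : s < a := hs.2
    have hkk : (t₁ - s) ^ (α - 1) ≤ (a - s) ^ (α - 1) :=
      Real.rpow_le_rpow_of_nonpos (by linarith) (by linarith) (by linarith)
    have hk₁n : (0:ℝ) ≤ (t₁ - s) ^ (α - 1) := Real.rpow_nonneg (by linarith) _
    have hkₐn : (0:ℝ) ≤ (a - s) ^ (α - 1) := Real.rpow_nonneg (by linarith) _
    rcases le_or_gt s τ with hsτ | hsτ
    · have hGs : 0 ≤ mlF α b c s := hnn0 s hs.1.le hsτ
      have h2 : (Ioo τ a).indicator (fun s => (a - s) ^ (α - 1) * (-(mlF α b c t₁))) s = 0 :=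
        indicator_of_notMem (fun hmem => absurd hmem.1 (not_lt.mpr hsτ)) _
      rw [h2]
      nlinarith
    · have hmem : s ∈ Ioo τ a := ⟨hsτ, hsa⟩
      rw [indicator_of_mem hmem]
      have hGs : mlF α b c t₁ ≤ mlF α b c s := hmin s ⟨hsτ.le, by linarith⟩
      rcases le_or_gt 0 (mlF α b c s) with hGs0 | hGs0
      · nlinarith
      · have e1 : mlF α b c s * (t₁ - s) ^ (α - 1) - mlF α b c s * (a - s) ^ (α - 1)
            = (-(mlF α b c s)) * ((a - s) ^ (α - 1) - (t₁ - s) ^ (α - 1)) := by ring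
        rw [e1]
        calc (-(mlF α b c s)) * ((a - s) ^ (α - 1) - (t₁ - s) ^ (α - 1))
            ≤ (-(mlF α b c t₁)) * ((a - s) ^ (α - 1) - (t₁ - s) ^ (α - 1)) :=
              mul_le_mul_of_nonneg_right (by linarith) (by linarith)
          _ ≤ (-(mlF α b c t₁)) * (a - s) ^ (α - 1) := mul_le_mul_of_nonneg_left (by linarith) (by linarith)
          _ = (a - s) ^ (α - 1) * (-(mlF α b c t₁)) := mul_comm _ _
  have hχval : ∫ s in Ioo (0:ℝ) a, (Ioo τ a).indicator (fun s => (a - s) ^ (α - 1) * (-(mlF α b c t₁))) s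
      ≤ (-(mlF α b c t₁)) * (ε ^ α / α) := by
    rw [integral_indicator measurableSet_Ioo,
      Measure.restrict_restrict measurableSet_Ioo,
      inter_eq_self_of_subset_left hIooτa]
    have hker : ∫ s in Ioo τ a, (a - s) ^ (α - 1) * (-(mlF α b c t₁))
        = ((a - τ) ^ α / α) * (-(mlF α b c t₁)) := by
      rw [integral_mul_const, ← integral_Ioc_eq_integral_Ioo, ker_val (by linarith) hτa]
      norm_num
    rw [hker]
    have haτε : (a - τ) ^ α ≤ ε ^ α :=
      Real.rpow_le_rpow (by linarith) (by linarith) hα.le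
    have hdd : (a - τ) ^ α / α ≤ ε ^ α / α := by gcongr
    nlinarith
  have hhead : ∫ s in Ioo (0:ℝ) a, mlF α b c s * (t₁ - s) ^ (α - 1)
      ≤ (∫ s in Ioo (0:ℝ) a, mlF α b c s * (a - s) ^ (α - 1)) + (-(mlF α b c t₁)) * (ε ^ α / α) := by
    have hsub : ∫ s in Ioo (0:ℝ) a, (mlF α b c s * (t₁ - s) ^ (α - 1) - mlF α b c s * (a - s) ^ (α - 1))
        = (∫ s in Ioo (0:ℝ) a, mlF α b c s * (t₁ - s) ^ (α - 1)) - ∫ s in Ioo (0:ℝ) a, mlF α b c s * (a - s) ^ (α - 1) :=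
      integral_sub hint_i hint_iii
    have hmono : ∫ s in Ioo (0:ℝ) a, (mlF α b c s * (t₁ - s) ^ (α - 1) - mlF α b c s * (a - s) ^ (α - 1))
        ≤ ∫ s in Ioo (0:ℝ) a, (Ioo τ a).indicator (fun s => (a - s) ^ (α - 1) * (-(mlF α b c t₁))) s :=
      setIntegral_mono_on (hint_i.sub hint_iii) hint_χ measurableSet_Ioo hptwise
    linarith
  have htail : ∫ s in Ioc a t₁, mlF α b c s * (t₁ - s) ^ (α - 1) ≤ 0 := by
    apply setIntegral_nonpos measurableSet_Ioc
    intro s hs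
    exact mul_nonpos_of_nonpos_of_nonneg (hneg' s hs.1 hs.2).le
      (Real.rpow_nonneg (by linarith [hs.2]) _)
  have hsplit : ∫ s in Ioo (0:ℝ) t₁, mlF α b c s * (t₁ - s) ^ (α - 1)
      = (∫ s in Ioo (0:ℝ) a, mlF α b c s * (t₁ - s) ^ (α - 1)) + ∫ s in Ioc a t₁, mlF α b c s * (t₁ - s) ^ (α - 1) := by
    rw [← integral_Ioc_eq_integral_Ioo, ← Ioc_union_Ioc_eq_Ioc ha0 hat₁,
      setIntegral_union (by
        rw [Set.disjoint_left]
        rintro x ⟨_, h1⟩ ⟨h2, _⟩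
        exact absurd h2 (not_lt.mpr h1)) measurableSet_Ioc hint_i' hint_ii,
      integral_Ioc_eq_integral_Ioo]
  have hIt₁ : mlF α b c t₁ = t₁ ^ b / Real.Gamma (b+1)
      - c / Real.Gamma α * ∫ s in Ioo (0:ℝ) t₁, mlF α b c s * (t₁ - s) ^ (α - 1) :=
    volterra' hα hb hc ht₁0
  have hIa : mlF α b c a = a ^ b / Real.Gamma (b+1)
      - c / Real.Gamma α * ∫ s in Ioo (0:ℝ) a, mlF α b c s * (a - s) ^ (α - 1) :=
    volterra' hα hb hc ha0
  have hhalf : (c / Real.Gamma α) * (ε ^ α / α) = 1/2 := by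
    rw [hεα, Real.Gamma_add_one hα.ne']
    field_simp
  have hq : 0 < c / Real.Gamma α := div_pos hc hΓα
  have hI1 : ∫ s in Ioo (0:ℝ) t₁, mlF α b c s * (t₁ - s) ^ (α - 1)
      ≤ (∫ s in Ioo (0:ℝ) a, mlF α b c s * (a - s) ^ (α - 1)) + (-(mlF α b c t₁)) * (ε ^ α / α) := by
    rw [hsplit]; linarith
  have h2 : (c / Real.Gamma α) * ∫ s in Ioo (0:ℝ) t₁, mlF α b c s * (t₁ - s) ^ (α - 1)
      ≤ (c / Real.Gamma α) * (∫ s in Ioo (0:ℝ) a, mlF α b c s * (a - s) ^ (α - 1)) + (-(mlF α b c t₁)) * (1/2) := by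
    calc (c / Real.Gamma α) * ∫ s in Ioo (0:ℝ) t₁, mlF α b c s * (t₁ - s) ^ (α - 1)
        ≤ (c / Real.Gamma α) * ((∫ s in Ioo (0:ℝ) a, mlF α b c s * (a - s) ^ (α - 1))
            + (-(mlF α b c t₁)) * (ε ^ α / α)) := mul_le_mul_of_nonneg_left hI1 hq.le
      _ = (c / Real.Gamma α) * (∫ s in Ioo (0:ℝ) a, mlF α b c s * (a - s) ^ (α - 1))
            + (-(mlF α b c t₁)) * ((c / Real.Gamma α) * (ε ^ α / α)) := by ring
      _ = (c / Real.Gamma α) * (∫ s in Ioo (0:ℝ) a, mlF α b c s * (a - s) ^ (α - 1))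
            + (-(mlF α b c t₁)) * (1/2) := by rw [hhalf]
  have hgm : a ^ b / Real.Gamma (b+1) ≤ t₁ ^ b / Real.Gamma (b+1) := by
    have h := Real.rpow_le_rpow ha0 hat₁ hb.le
    gcongr
  linarith [hIt₁, hIa, hFa, h2, hgm, hm]

/-- Upper bound from the Volterra identity. -/
lemma mlF_le {α b c : ℝ} (hα : 0 < α) (hα1 : α ≤ 1) (hb : 0 < b) (hc : 0 < c)
    {t : ℝ} (ht : 0 ≤ t) : mlF α b c t ≤ t ^ b / Real.Gamma (b+1) := by
  have h := volterra' hα hb hc ht (c := c)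
  have hΓα : 0 < Real.Gamma α := Real.Gamma_pos_of_pos hα
  have hint : 0 ≤ ∫ s in Ioo (0:ℝ) t, mlF α b c s * (t-s) ^ (α-1) := by
    apply setIntegral_nonneg measurableSet_Ioo
    intro s hs
    exact mul_nonneg (mlF_nonneg hα hα1 hb hc s hs.1.le)
      (Real.rpow_nonneg (by linarith [hs.2]) _)
  have hq : 0 ≤ c / Real.Gamma α := (div_pos hc hΓα).le
  nlinarith

/-- Laplace transform of a power. -/
lemma lap_pow {lam q : ℝ} (hlam : 0 < lam) (hq : -1 < q) :
    ∫ t in Ioi (0:ℝ), Real.exp (-lam * t) * t ^ q = (1/lam) ^ (q+1) * Real.Gamma (q+1) := by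
  have h := integral_rpow_mul_exp_neg_mul_Ioi (a := q+1) (r := lam) (by linarith) hlam
  rw [← h]
  apply setIntegral_congr_fun measurableSet_Ioi
  intro t _
  have e : q + 1 - 1 = q := by ring
  show Real.exp (-lam * t) * t ^ q = t ^ (q + 1 - 1) * Real.exp (-(lam * t))
  rw [e, neg_mul]
  ring

/-- Integrability of exp * power. -/
lemma lap_pow_int {lam q : ℝ} (hlam : 0 < lam) (hq : -1 < q) :
    IntegrableOn (fun t => Real.exp (-lam * t) * t ^ q) (Ioi 0) := by
  have h := integrableOn_rpow_mul_exp_neg_mul_rpow hq zero_lt_one hlam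
  simp only [Real.rpow_one] at h
  apply h.congr_fun _ measurableSet_Ioi
  intro t _
  show t ^ q * Real.exp (-lam * t) = Real.exp (-lam * t) * t ^ q
  ring

/-- Integrability of the weighted Mittag-Leffler function. -/
lemma lap_mlF_int {α b c lam : ℝ} (hα : 0 < α) (hα1 : α ≤ 1) (hb : 0 < b) (hc : 0 < c)
    (hlam : 0 < lam) :
    IntegrableOn (fun t => Real.exp (-lam * t) * mlF α b c t) (Ioi 0) := by
  have hΓb : 0 < Real.Gamma (b+1) := Real.Gamma_pos_of_pos (by linarith)
  apply Integrable.mono ((lap_pow_int hlam (by linarith : (-1:ℝ) < b)).div_const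
    (Real.Gamma (b+1)))
  · exact (((Real.continuous_exp.comp (continuous_const.mul continuous_id)).continuousOn).mul
      ((mlF_contOn hα hb hc).mono (fun x hx => le_of_lt hx))).aestronglyMeasurable
      measurableSet_Ioi
  · rw [ae_restrict_iff' measurableSet_Ioi]
    apply Eventually.of_forall
    intro t ht
    have ht0 : (0:ℝ) ≤ t := (le_of_lt ht)
    have h1 : 0 ≤ mlF α b c t := mlF_nonneg hα hα1 hb hc t ht0
    have h2 : mlF α b c t ≤ t ^ b / Real.Gamma (b+1) := mlF_le hα hα1 hb hc ht0
    have he : 0 < Real.exp (-lam * t) := Real.exp_pos _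
    rw [Real.norm_eq_abs, Real.norm_eq_abs, abs_of_nonneg (by positivity),
      abs_of_nonneg (by positivity : (0:ℝ) ≤ Real.exp (-lam*t) * t ^ b / Real.Gamma (b+1))]
    rw [mul_div_assoc]
    exact mul_le_mul_of_nonneg_left h2 he.le

/-- The Laplace transform of `mlF`. -/
lemma lap_mlF {α b c lam : ℝ} (hα : 0 < α) (hα1 : α ≤ 1) (hb : 0 < b) (hc : 0 < c)
    (hlam : 0 < lam) :
    ∫ t in Ioi (0:ℝ), Real.exp (-lam * t) * mlF α b c t
      = (1/lam) ^ (b+1) / (1 + c * (1/lam) ^ α) := by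
  have hΓα : 0 < Real.Gamma α := Real.Gamma_pos_of_pos hα
  have hΓb : 0 < Real.Gamma (b+1) := Real.Gamma_pos_of_pos (by linarith)
  have hf : IntegrableOn (fun t => Real.exp (-lam * t) * mlF α b c t) (Ioi 0) :=
    lap_mlF_int hα hα1 hb hc hlam
  have hg : IntegrableOn (fun t => Real.exp (-lam * t) * t ^ (α-1)) (Ioi 0) :=
    lap_pow_int hlam (by linarith)
  have hconv := integral_posConvolution hf hg (ContinuousLinearMap.mul ℝ ℝ)
  simp only [ContinuousLinearMap.mul_apply'] at hconv
  -- identify the left-hand side of hconv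
  have hlhs : ∫ x in Ioi (0:ℝ), ∫ t in (0:ℝ)..x,
        (Real.exp (-lam * t) * mlF α b c t) * (Real.exp (-lam * (x - t)) * (x - t) ^ (α-1))
      = ∫ x in Ioi (0:ℝ), Real.exp (-lam * x) * (Real.Gamma α / (-c)
          * (mlF α b c x - x ^ b / Real.Gamma (b+1))) := by
    apply setIntegral_congr_fun measurableSet_Ioi
    intro x hx
    have hx0 : (0:ℝ) < x := hx
    dsimp only
    have e1 : ∀ t : ℝ, (Real.exp (-lam * t) * mlF α b c t)
          * (Real.exp (-lam * (x - t)) * (x - t) ^ (α-1))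
        = Real.exp (-lam * x) * (mlF α b c t * (x - t) ^ (α-1)) := by
      intro t
      have : Real.exp (-lam * t) * Real.exp (-lam * (x - t)) = Real.exp (-lam * x) := by
        rw [← Real.exp_add]
        congr 1
        ring
      calc (Real.exp (-lam * t) * mlF α b c t)
            * (Real.exp (-lam * (x - t)) * (x - t) ^ (α-1))
          = (Real.exp (-lam * t) * Real.exp (-lam * (x - t)))
            * (mlF α b c t * (x - t) ^ (α-1)) := by ring
        _ = Real.exp (-lam * x) * (mlF α b c t * (x - t) ^ (α-1)) := by rw [this]
    rw [intervalIntegral.integral_congr (fun t _ => e1 t),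
      intervalIntegral.integral_const_mul,
      intervalIntegral.integral_of_le hx0.le, integral_Ioc_eq_integral_Ioo,
      volterra hα hb hc hx0]
  rw [hlhs] at hconv
  -- compute both sides
  have hB : ∫ t in Ioi (0:ℝ), Real.exp (-lam * t) * t ^ (α-1)
      = (1/lam) ^ α * Real.Gamma α := by
    have := lap_pow hlam (show (-1:ℝ) < α - 1 by linarith)
    rw [this]
    norm_num
  have hgpow : IntegrableOn (fun t => Real.exp (-lam * t) * t ^ b / Real.Gamma (b+1)) (Ioi 0) := by
    exact (lap_pow_int hlam (by linarith : (-1:ℝ) < b)).div_const _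
  have hlhs2 : ∫ x in Ioi (0:ℝ), Real.exp (-lam * x) * (Real.Gamma α / (-c)
          * (mlF α b c x - x ^ b / Real.Gamma (b+1)))
      = Real.Gamma α / (-c) * ((∫ x in Ioi (0:ℝ), Real.exp (-lam * x) * mlF α b c x)
          - (1/lam) ^ (b+1)) := by
    have e2 : ∀ x : ℝ, Real.exp (-lam * x) * (Real.Gamma α / (-c)
          * (mlF α b c x - x ^ b / Real.Gamma (b+1)))
        = Real.Gamma α / (-c) * (Real.exp (-lam * x) * mlF α b c x
            - Real.exp (-lam * x) * x ^ b / Real.Gamma (b+1)) := by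
      intro x; ring
    rw [setIntegral_congr_fun measurableSet_Ioi (fun x _ => e2 x), integral_const_mul]
    congr 1
    rw [integral_sub hf hgpow]
    congr 1
    have e3 : ∀ x : ℝ, Real.exp (-lam * x) * x ^ b / Real.Gamma (b+1)
        = (Real.exp (-lam * x) * x ^ b) * (1 / Real.Gamma (b+1)) := by intro x; ring
    rw [setIntegral_congr_fun measurableSet_Ioi (fun x _ => e3 x), integral_mul_const,
      lap_pow hlam (by linarith : (-1:ℝ) < b)]
    field_simp
  rw [hlhs2, hB] at hconv
  -- solve the linear equation
  set A := ∫ t in Ioi (0:ℝ), Real.exp (-lam * t) * mlF α b c t with hA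
  have hpow : (0:ℝ) < (1/lam) ^ α := Real.rpow_pos_of_pos (by positivity) _
  have hden : (0:ℝ) < 1 + c * (1/lam) ^ α := by positivity
  have hsolve : A * (1 + c * (1/lam) ^ α) = (1/lam) ^ (b+1) := by
    have hc' : (-c) ≠ 0 := by exact neg_ne_zero.mpr hc.ne'
    field_simp at hconv
    nlinarith [hconv, hΓα]
  rw [eq_div_iff hden.ne']
  exact hsolve

end MLProof

open MLProof

/-- For `0 < β₁ < β₂ < 1` and `c₁, c₂ > 0`, the function
`t ↦ (1/c₂) t^{β₂} E_{β₂-β₁, β₂+1}(-(c₁/c₂) t^{β₂-β₁})` has Laplace transform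
`λ ↦ 1/(c₁ λ^{β₁+1} + c₂ λ^{β₂+1})` for `λ > 0`. -/
theorem laplace_mean_inverse_subordinator (β₁ β₂ c₁ c₂ : ℝ)
    (h1 : 0 < β₁) (h12 : β₁ < β₂) (h2 : β₂ < 1)
    (hc1 : 0 < c₁) (hc2 : 0 < c₂)
    (lam : ℝ) (hlam : 0 < lam) :
    ∫ t in Ioi (0 : ℝ), Real.exp (-lam * t) *
        ((1 / c₂) * t ^ β₂ *
          (∑' j : ℕ, (-(c₁ / c₂) * t ^ (β₂ - β₁)) ^ j /
            Real.Gamma ((β₂ - β₁) * j + (β₂ + 1))))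
      = 1 / (c₁ * lam ^ (β₁ + 1) + c₂ * lam ^ (β₂ + 1)) := by
  have hα : 0 < β₂ - β₁ := by linarith
  have hα1 : β₂ - β₁ ≤ 1 := by linarith
  have hb : 0 < β₂ := by linarith
  have hc : 0 < c₁ / c₂ := by positivity
  have key := lap_mlF (lam := lam) hα hα1 hb hc hlam
  have hcongr : ∀ t ∈ Ioi (0:ℝ), Real.exp (-lam * t) *
        ((1 / c₂) * t ^ β₂ *
          (∑' j : ℕ, (-(c₁ / c₂) * t ^ (β₂ - β₁)) ^ j /
            Real.Gamma ((β₂ - β₁) * j + (β₂ + 1))))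
      = (1/c₂) * (Real.exp (-lam * t) * mlF (β₂ - β₁) β₂ (c₁/c₂) t) := by
    intro t ht
    have ht0 : (0:ℝ) < t := ht
    have hsum : t ^ β₂ * (∑' j : ℕ, (-(c₁ / c₂) * t ^ (β₂ - β₁)) ^ j /
          Real.Gamma ((β₂ - β₁) * j + (β₂ + 1)))
        = mlF (β₂ - β₁) β₂ (c₁/c₂) t := by
      rw [mlF, ← tsum_mul_left]
      apply tsum_congr
      intro j
      rw [mlT]
      have e1 : (-(c₁/c₂) * t ^ (β₂-β₁)) ^ j = (-(c₁/c₂)) ^ j * (t ^ (β₂-β₁)) ^ j :=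
        mul_pow _ _ j
      have e2 : (t ^ (β₂-β₁)) ^ j = t ^ ((β₂-β₁) * j) := by
        rw [← Real.rpow_natCast (t ^ (β₂-β₁)) j, ← Real.rpow_mul ht0.le]
      have e3 : t ^ ((β₂-β₁) * j + β₂) = t ^ ((β₂-β₁) * j) * t ^ β₂ :=
        Real.rpow_add ht0 _ _
      have e4 : (β₂-β₁) * (j:ℝ) + (β₂+1) = (β₂-β₁) * j + β₂ + 1 := by ring
      rw [e1, e2, e4, e3]
      ring
    rw [← hsum]
    ring
  rw [setIntegral_congr_fun measurableSet_Ioi hcongr, integral_const_mul, key]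
  -- final algebra
  have hX : (0:ℝ) < lam ^ (β₁+1) := Real.rpow_pos_of_pos hlam _
  have hY : (0:ℝ) < lam ^ (β₂+1) := Real.rpow_pos_of_pos hlam _
  have hZ : (0:ℝ) < lam ^ (β₂-β₁) := Real.rpow_pos_of_pos hlam _
  have hZX : lam ^ (β₂-β₁) * lam ^ (β₁+1) = lam ^ (β₂+1) := by
    rw [← Real.rpow_add hlam]
    congr 1
    ring
  have hi1 : (1/lam : ℝ) ^ (β₂+1) = (lam ^ (β₂+1))⁻¹ := by
    rw [one_div]; exact Real.inv_rpow hlam.le _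
  have hi2 : (1/lam : ℝ) ^ (β₂-β₁) = (lam ^ (β₂-β₁))⁻¹ := by
    rw [one_div]; exact Real.inv_rpow hlam.le _
  rw [hi1, hi2]
  have hden : (0:ℝ) < 1 + c₁/c₂ * (lam ^ (β₂-β₁))⁻¹ := by positivity
  field_simp
  linear_combination c₁ * hZX
end
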